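/- Let (V_i)_{i=1}^∞ be a finite dimensional decomposition of a Banach space X, let H be a finite-dimensional subspace of X satisfying V_i ⊆ H for i = 1, …, k, and let ε > 0. Then there exist an integer m ≥ k and a linear operator A : Y → X, where Y := V_{k+1} + V_{k+2} + ⋯ + V_{m+1} (a direct sum inside X), satisfying the following three conditions: (1) ‖A y − y‖ ≤ ε ‖y‖ for all y ∈ Y; (2) A(Y) ⊆ span((V_1 + ⋯ + V_{m+1}) ∪ H); (3) H ⊆ V_1 + V_2 + ⋯ + V_k + A(Y). Moreover A can be chosen so that A x = x for x ∈ V_1 + ⋯ + V_k (in particular the spaces V_1, …, V_k, A(Y), V_{m+2}, V_{m+3}, … form a blocking-type decomposition). -/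

import Mathlib

open Filter Topology Metric Set

noncomputable section

set_option synthInstance.maxHeartbeats 1000000
set_option maxHeartbeats 2000000

/-- `(W i)` is a (Schauder) finite dimensional decomposition of `X`: every `x` has a
unique representation `x = ∑ᵢ wᵢ` with `wᵢ ∈ W i`, the series converging in norm. -/
def IsFDD {X : Type*} [NormedAddCommGroup X] [NormedSpace ℝ X]
    (W : ℕ → Submodule ℝ X) : Prop :=
  ∀ x : X, ∃! w : (i : ℕ) → W i,
    Tendsto (fun n => ∑ i ∈ Finset.range n, ((w i : X))) atTop (𝓝 x)

/-- `S` is the sequence of canonical partial-sum projections associated with the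
decomposition `(W i)`: `S n (∑ᵢ wᵢ) = ∑_{i < n} wᵢ`. -/
def IsPartialSumProj {X : Type*} [NormedAddCommGroup X] [NormedSpace ℝ X]
    (W : ℕ → Submodule ℝ X) (S : ℕ → X →L[ℝ] X) : Prop :=
  ∀ (x : X) (w : (i : ℕ) → W i),
    Tendsto (fun n => ∑ i ∈ Finset.range n, ((w i : X))) atTop (𝓝 x) →
    ∀ n, S n x = ∑ i ∈ Finset.range n, ((w i : X))

section Aux

variable {X : Type*} [NormedAddCommGroup X] [NormedSpace ℝ X]
  {V : ℕ → Submodule ℝ X} {S : ℕ → X →L[ℝ] X}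

lemma FDD.rep (hV : IsFDD V) (hS : IsPartialSumProj V S) (x : X) :
    ∃ w : (i : ℕ) → V i,
      Tendsto (fun n => ∑ i ∈ Finset.range n, ((w i : X))) atTop (𝓝 x) ∧
      ∀ n, S n x = ∑ i ∈ Finset.range n, ((w i : X)) := by
  obtain ⟨w, hw, -⟩ := hV x
  exact ⟨w, hw, hS x w hw⟩

lemma FDD.tendsto_S (hV : IsFDD V) (hS : IsPartialSumProj V S) (x : X) :
    Tendsto (fun n => S n x) atTop (𝓝 x) := by
  obtain ⟨w, hw, hps⟩ := FDD.rep hV hS x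
  exact hw.congr fun n => (hps n).symm

lemma FDD.S_S (hV : IsFDD V) (hS : IsPartialSumProj V S) (x : X) {j n : ℕ}
    (hjn : j ≤ n) : S j (S n x) = S j x := by
  obtain ⟨w, hw, hps⟩ := FDD.rep hV hS x
  set w' : (i : ℕ) → V i := fun i => if i < n then w i else 0 with hw'
  have hcoe : ∀ i, ((w' i : X)) = if i < n then (w i : X) else 0 := by
    intro i; by_cases h : i < n <;> simp [hw', h]
  have hsum : ∀ N, n ≤ N → ∑ i ∈ Finset.range N, ((w' i : X)) = S n x := by
    intro N hN
    rw [hps n]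
    rw [← Finset.sum_subset (Finset.range_subset_range.2 hN) (fun i _ hi => by
      simp only [hcoe]; rw [if_neg (by simpa using hi)])]
    exact Finset.sum_congr rfl fun i hi => by
      rw [hcoe, if_pos (Finset.mem_range.1 hi)]
  have htend : Tendsto (fun N => ∑ i ∈ Finset.range N, ((w' i : X))) atTop (𝓝 (S n x)) := by
    apply Tendsto.congr' _ tendsto_const_nhds
    filter_upwards [eventually_ge_atTop n] with N hN
    exact (hsum N hN).symm
  rw [hS (S n x) w' htend j, hps j]
  exact Finset.sum_congr rfl fun i hi => by
    rw [hcoe, if_pos (lt_of_lt_of_le (Finset.mem_range.1 hi) hjn)]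

lemma FDD.S_single (hV : IsFDD V) (hS : IsPartialSumProj V S) {i : ℕ} (v : V i) (n : ℕ) :
    S n (v : X) = if i < n then (v : X) else 0 := by
  set w : (j : ℕ) → V j := fun j => if h : j = i then h ▸ v else 0 with hw
  have hcoe : ∀ j, ((w j : X)) = if j = i then (v : X) else 0 := by
    intro j
    by_cases h : j = i
    · subst h; simp [hw]
    · simp [hw, h]
  have hsum : ∀ N, i < N → ∑ j ∈ Finset.range N, ((w j : X)) = (v : X) := by
    intro N hN
    rw [Finset.sum_congr rfl (fun j _ => hcoe j), Finset.sum_ite_eq' (Finset.range N) i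
      (fun _ => (v : X)), if_pos (Finset.mem_range.2 hN)]
  have htend : Tendsto (fun N => ∑ j ∈ Finset.range N, ((w j : X))) atTop (𝓝 (v : X)) := by
    apply Tendsto.congr' _ tendsto_const_nhds
    filter_upwards [eventually_ge_atTop (i + 1)] with N hN
    exact (hsum N hN).symm
  rw [hS (v : X) w htend n, Finset.sum_congr rfl (fun j _ => hcoe j),
    Finset.sum_ite_eq' (Finset.range n) i (fun _ => (v : X))]
  simp

lemma FDD.S_mem (hV : IsFDD V) (hS : IsPartialSumProj V S) (x : X) (n : ℕ) :
    S n x ∈ ⨆ i ∈ Finset.Iio n, V i := by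
  obtain ⟨w, hw, hps⟩ := FDD.rep hV hS x
  rw [hps n]
  refine Submodule.sum_mem _ fun i hi => ?_
  exact Submodule.mem_iSup_of_mem i (Submodule.mem_iSup_of_mem
    (by simpa using Finset.mem_range.1 hi) (w i).2)

lemma FDD.S_sub_mem (hV : IsFDD V) (hS : IsPartialSumProj V S) (x : X) {j n : ℕ}
    (hjn : j ≤ n) : S n x - S j x ∈ ⨆ i ∈ Finset.Ico j n, V i := by
  obtain ⟨w, hw, hps⟩ := FDD.rep hV hS x
  rw [hps n, hps j, ← Finset.sum_Ico_eq_sub _ hjn]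
  refine Submodule.sum_mem _ fun i hi => ?_
  exact Submodule.mem_iSup_of_mem i (Submodule.mem_iSup_of_mem hi (w i).2)

lemma exists_good_n
    (htS : ∀ x, Tendsto (fun n => S n x) atTop (𝓝 x))
    (P : Submodule ℝ X) [FiniteDimensional ℝ P] {δ : ℝ} (hδ : 0 < δ) (n₀ : ℕ) :
    ∃ n, n₀ ≤ n ∧ ∀ p ∈ P, ‖p - S n p‖ ≤ δ * ‖p‖ := by
  classical
  set b := Module.finBasis ℝ P with hb
  set c : Fin (Module.finrank ℝ P) → P →L[ℝ] ℝ :=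
    fun j => LinearMap.toContinuousLinearMap (b.coord j) with hc
  set M : ℝ := ∑ j, ‖c j‖ with hM
  have hM0 : 0 ≤ M := Finset.sum_nonneg fun j _ => ContinuousLinearMap.opNorm_nonneg _
  set δ' : ℝ := δ / (M + 1) with hδ'
  have hδ'0 : 0 < δ' := div_pos hδ (by linarith)
  have hev : ∀ᶠ n in atTop, ∀ j, ‖((b j : X)) - S n ((b j : X))‖ ≤ δ' := by
    rw [eventually_all]
    intro j
    have := (htS ((b j : X))).const_sub ((b j : X))
    simp only [sub_self] at this
    have h2 := this.norm
    rw [norm_zero] at h2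
    exact h2.eventually_le_const hδ'0
  obtain ⟨n, hn, hn0⟩ := (hev.and (eventually_ge_atTop n₀)).exists
  refine ⟨n, hn0, fun p hp => ?_⟩
  set q : P := ⟨p, hp⟩ with hq
  have hrep : p = ∑ j, b.repr q j • ((b j : X)) := by
    conv_lhs => rw [show p = (q : X) from rfl, ← b.sum_repr q]
    push_cast
    rfl
  have hkey : p - S n p = ∑ j, b.repr q j • (((b j : X)) - S n ((b j : X))) := by
    rw [hrep]
    rw [map_sum]
    simp only [map_smul, smul_sub]
    rw [← Finset.sum_sub_distrib]
  rw [hkey]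
  calc ‖∑ j, b.repr q j • (((b j : X)) - S n ((b j : X)))‖
      ≤ ∑ j, ‖b.repr q j • (((b j : X)) - S n ((b j : X)))‖ := norm_sum_le _ _
    _ ≤ ∑ j, ‖c j‖ * ‖q‖ * δ' := by
        refine Finset.sum_le_sum fun j _ => ?_
        rw [norm_smul]
        have h1 : ‖b.repr q j‖ ≤ ‖c j‖ * ‖q‖ := (c j).le_opNorm q
        exact mul_le_mul h1 (hn j) (norm_nonneg _) (by positivity)
    _ = M * ‖p‖ * δ' := by
        rw [← Finset.sum_mul, ← Finset.sum_mul]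
        congr 2
    _ ≤ δ * ‖p‖ := by
        rw [hδ']
        rw [mul_comm (M * ‖p‖) _, ← mul_assoc]
        have : δ / (M + 1) * M ≤ δ := by
          rw [div_mul_eq_mul_div, div_le_iff₀ (by linarith)]
          nlinarith
        exact mul_le_mul_of_nonneg_right this (norm_nonneg _)

end Aux

/-- Lemma on enlarging a block of a finite dimensional decomposition so that it
(together with the first `k` spaces) captures a given finite-dimensional subspace `H`.
Indices are 0-based: the first `k` spaces are `V 0, …, V (k-1)`, and the block `Y`
consists of `V k, …, V m`. The operator `A` is given on all of `X`; only its values on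
`V 0 + ⋯ + V (k-1)` and on `Y` matter. -/
theorem blocking_lemma
    (X : Type*) [NormedAddCommGroup X] [NormedSpace ℝ X] [CompleteSpace X]
    (V : ℕ → Submodule ℝ X) (hfd : ∀ i, FiniteDimensional ℝ (V i))
    (hV : IsFDD V)
    (S : ℕ → X →L[ℝ] X) (hS : IsPartialSumProj V S)
    (hbdd : ∃ K : ℝ, ∀ n, ‖S n‖ ≤ K)
    (H : Submodule ℝ X) [FiniteDimensional ℝ H]
    (k : ℕ) (hVH : ∀ i < k, V i ≤ H)
    (ε : ℝ) (hε : 0 < ε) :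
    ∃ m : ℕ, k ≤ m ∧ ∃ A : X →ₗ[ℝ] X,
      -- (1) `A` is a small perturbation of the identity on `Y = V k + ⋯ + V m`
      (∀ y ∈ ⨆ i ∈ Finset.Icc k m, V i, ‖A y - y‖ ≤ ε * ‖y‖) ∧
      -- (2) `A(Y) ⊆ span((V 0 + ⋯ + V m) ∪ H)`
      (Submodule.map A (⨆ i ∈ Finset.Icc k m, V i) ≤ (⨆ i ∈ Finset.Iic m, V i) ⊔ H) ∧
      -- (3) `H ⊆ V 0 + ⋯ + V (k-1) + A(Y)`
      (H ≤ (⨆ i ∈ Finset.Iio k, V i) ⊔ Submodule.map A (⨆ i ∈ Finset.Icc k m, V i)) ∧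
      -- moreover `A` is the identity on `V 0 + ⋯ + V (k-1)`
      (∀ x ∈ ⨆ i ∈ Finset.Iio k, V i, A x = x) := by
  classical
  have htS : ∀ x, Tendsto (fun n => S n x) atTop (𝓝 x) := FDD.tendsto_S hV hS
  -- the first k spaces; S k is the identity there
  have hU : ∀ x ∈ ⨆ i ∈ Finset.Iio k, V i, S k x = x := by
    have hle : (⨆ i ∈ Finset.Iio k, V i) ≤
        LinearMap.ker ((S k : X →ₗ[ℝ] X) - LinearMap.id) := by
      refine iSup_le fun i => iSup_le fun hi => fun v hv => ?_
      have : S k v = v := by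
        rw [show v = ((⟨v, hv⟩ : V i) : X) from rfl, FDD.S_single hV hS]
        rw [if_pos (by simpa using hi)]
      simp [LinearMap.mem_ker, this]
    intro x hx
    have := hle hx
    simp only [LinearMap.mem_ker, LinearMap.sub_apply, LinearMap.id_apply,
      ContinuousLinearMap.coe_coe, sub_eq_zero] at this
    exact this
  -- H' = (1 - S k) H
  set H' : Submodule ℝ X :=
    H.map ((ContinuousLinearMap.id ℝ X - S k : X →L[ℝ] X) : X →ₗ[ℝ] X) with hH'def
  haveI : FiniteDimensional ℝ H' := Module.Finite.map _ _
  have hIioH : (⨆ i ∈ Finset.Iio k, V i) ≤ H := by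
    refine iSup_le fun i => iSup_le fun hi => hVH i (by simpa using hi)
  have hH'H : H' ≤ H := by
    rintro _ ⟨h, hh, rfl⟩
    simp only [ContinuousLinearMap.coe_sub', Pi.sub_apply, ContinuousLinearMap.coe_id',
      id_eq, ContinuousLinearMap.coe_coe]
    exact Submodule.sub_mem _ hh (hIioH (FDD.S_mem hV hS h k))
  have hH'0 : ∀ x ∈ H', S k x = 0 := by
    rintro _ ⟨h, hh, rfl⟩
    simp only [ContinuousLinearMap.coe_sub', Pi.sub_apply, ContinuousLinearMap.coe_id',
      id_eq, ContinuousLinearMap.coe_coe]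
    rw [map_sub, FDD.S_S hV hS h (le_refl k), sub_self]
  -- continuous projection onto H'
  obtain ⟨π, hπ⟩ := Submodule.ClosedComplemented.of_finiteDimensional H'
  set C : ℝ := max ‖π‖ 1 with hC
  have hC1 : (1 : ℝ) ≤ C := le_max_right _ _
  have hC0 : (0 : ℝ) < C := lt_of_lt_of_le one_pos hC1
  have hCπ : ∀ x : X, ‖(π x : X)‖ ≤ C * ‖x‖ := by
    intro x
    calc ‖(π x : X)‖ = ‖π x‖ := rfl
      _ ≤ ‖π‖ * ‖x‖ := π.le_opNorm x
      _ ≤ C * ‖x‖ := by gcongr; exact le_max_left _ _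
  set δ : ℝ := min 1 ε / (2 * C) with hδdef
  have hδ0 : 0 < δ := by positivity
  have hCδ : C * δ ≤ 1 / 2 := by
    rw [hδdef, mul_div_assoc']
    rw [div_le_div_iff₀ (by positivity) (by norm_num)]
    have h1 : min 1 ε ≤ 1 := min_le_left _ _
    nlinarith
  have h2Cδ : 2 * C * δ ≤ ε := by
    rw [hδdef]
    rw [mul_div_assoc']
    rw [div_le_iff₀ (by positivity)]
    have h1 : min 1 ε ≤ ε := min_le_right _ _
    nlinarith [min_le_right 1 ε, hC0.le]
  obtain ⟨n, hkn, hgood⟩ := exists_good_n htS H' hδ0 (k + 1)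
  obtain ⟨m, rfl⟩ : ∃ m, n = m + 1 := ⟨n - 1, by omega⟩
  have hkm : k ≤ m := by omega
  refine ⟨m, hkm, ?_⟩
  set Y : Submodule ℝ X := ⨆ i ∈ Finset.Icc k m, V i with hYdef
  have hYker : ∀ y ∈ Y, S k y = 0 := by
    have hle : Y ≤ LinearMap.ker (S k : X →ₗ[ℝ] X) := by
      refine iSup_le fun i => iSup_le fun hi => fun v hv => ?_
      have hik : ¬ i < k := by simp at hi; omega
      have : S k v = 0 := by
        rw [show v = ((⟨v, hv⟩ : V i) : X) from rfl, FDD.S_single hV hS, if_neg hik]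
      simpa [LinearMap.mem_ker] using this
    intro y hy
    simpa [LinearMap.mem_ker] using hle hy
  have hYIic : Y ≤ ⨆ i ∈ Finset.Iic m, V i := by
    refine iSup_le fun i => iSup_le fun hi => ?_
    refine le_iSup_of_le i (le_iSup_of_le (by simp at hi ⊢; omega) le_rfl)
  have hQmemY : ∀ x : X, S (m + 1) x - S k x ∈ Y := by
    intro x
    have := FDD.S_sub_mem hV hS x (show k ≤ m + 1 by omega)
    have hIcc : Finset.Ico k (m + 1) = Finset.Icc k m := by ext i; simp
    rwa [hIcc] at this
  -- θ = π ∘ S (m+1) ∘ incl : H' → H', close to the identity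
  set θ : H' →L[ℝ] H' := π.comp ((S (m + 1)).comp H'.subtypeL) with hθdef
  have hθapp : ∀ h' : H', θ h' = π (S (m + 1) (h' : X)) := fun h' => rfl
  have hθclose : ∀ h' : H', ‖h' - θ h'‖ ≤ C * δ * ‖h'‖ := by
    intro h'
    have h1 : h' = π (h' : X) := (hπ h').symm
    have h2 : h' - θ h' = π ((h' : X) - S (m + 1) (h' : X)) := by
      rw [map_sub, hθapp, ← h1]
    have h3 : ‖(h' : X) - S (m + 1) (h' : X)‖ ≤ δ * ‖(h' : X)‖ :=
      hgood (h' : X) h'.2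
    calc ‖h' - θ h'‖ = ‖π ((h' : X) - S (m + 1) (h' : X))‖ := by rw [h2]
      _ ≤ ‖π‖ * ‖(h' : X) - S (m + 1) (h' : X)‖ := π.le_opNorm _
      _ ≤ C * (δ * ‖(h' : X)‖) := by
          refine mul_le_mul (le_max_left _ _) h3 (norm_nonneg _) hC0.le
      _ = C * δ * ‖h'‖ := by rw [show ‖(h' : X)‖ = ‖h'‖ from rfl, mul_assoc]
  have hθnorm : ‖(1 : H' →L[ℝ] H') - θ‖ < 1 := by
    have : ‖(1 : H' →L[ℝ] H') - θ‖ ≤ 1 / 2 := by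
      refine ContinuousLinearMap.opNorm_le_bound _ (by norm_num) fun h' => ?_
      have := hθclose h'
      calc ‖((1 : H' →L[ℝ] H') - θ) h'‖ = ‖h' - θ h'‖ := rfl
        _ ≤ C * δ * ‖h'‖ := this
        _ ≤ 1 / 2 * ‖h'‖ := by gcongr
    linarith
  set u : (H' →L[ℝ] H')ˣ := Units.oneSub ((1 : H' →L[ℝ] H') - θ) hθnorm with hudef
  have huval : (u : H' →L[ℝ] H') = θ := by
    show (1 : H' →L[ℝ] H') - ((1 : H' →L[ℝ] H') - θ) = θ
    rw [sub_sub_cancel]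
  have huinv_bound : ∀ w : H', ‖((u⁻¹ : (H' →L[ℝ] H')ˣ) : H' →L[ℝ] H') w‖ ≤ 2 * ‖w‖ := by
    intro w
    set vinv := ((u⁻¹ : (H' →L[ℝ] H')ˣ) : H' →L[ℝ] H') w with hv
    have hθv : θ vinv = w := by
      have := u.mul_inv
      have h2 := congrArg (fun f : H' →L[ℝ] H' => f w) this
      simpa [ContinuousLinearMap.mul_apply, huval, hv] using h2
    have hid : vinv = w + (vinv - θ vinv) := by rw [hθv]; abel
    have : ‖vinv‖ ≤ ‖w‖ + 1 / 2 * ‖vinv‖ := by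
      calc ‖vinv‖ = ‖w + (vinv - θ vinv)‖ := by rw [← hid]
        _ ≤ ‖w‖ + ‖vinv - θ vinv‖ := norm_add_le _ _
        _ ≤ ‖w‖ + 1 / 2 * ‖vinv‖ := by
            have h1 := hθclose vinv
            have h2 : C * δ * ‖vinv‖ ≤ 1 / 2 * ‖vinv‖ := by gcongr
            linarith
    linarith
  -- ρ and A
  set ρ : X →L[ℝ] H' :=
    ((u⁻¹ : (H' →L[ℝ] H')ˣ) : H' →L[ℝ] H').comp
      (π.comp (ContinuousLinearMap.id ℝ X - S k)) with hρdef
  set A : X →L[ℝ] X :=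
    ContinuousLinearMap.id ℝ X +
      (H'.subtypeL - (S (m + 1) - S k).comp H'.subtypeL).comp ρ with hAdef
  have hAapp : ∀ x : X,
      A x = x + ((ρ x : X) - (S (m + 1) (ρ x : X) - S k (ρ x : X))) := fun x => rfl
  have hρapp : ∀ x : X,
      ρ x = ((u⁻¹ : (H' →L[ℝ] H')ˣ) : H' →L[ℝ] H') (π (x - S k x)) := fun x => rfl
  have hSkρ : ∀ x : X, S k ((ρ x : X)) = 0 := fun x => hH'0 _ (ρ x).2
  -- key exact identity : A (S (m+1) h') = h' for h' ∈ H'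
  have hkey : ∀ h' : H', A (S (m + 1) (h' : X)) = (h' : X) := by
    intro h'
    set z : X := S (m + 1) (h' : X) with hz
    have hSkz : S k z = 0 := by
      rw [hz, FDD.S_S hV hS _ (by omega)]
      exact hH'0 _ h'.2
    have hρz : ρ z = h' := by
      rw [hρapp, hSkz, sub_zero]
      have : π z = θ h' := rfl
      rw [this]
      have := u.inv_mul
      have h2 := congrArg (fun f : H' →L[ℝ] H' => f h') this
      simpa [ContinuousLinearMap.mul_apply, huval] using h2
    rw [hAapp, hρz]
    have hSk' : S k ((h' : X)) = 0 := hH'0 _ h'.2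
    rw [hSk', sub_zero, ← hz]
    abel
  refine ⟨(A : X →ₗ[ℝ] X), ?_, ?_, ?_, ?_⟩
  · -- (1) small perturbation on Y
    intro y hy
    have hSky : S k y = 0 := hYker y hy
    have hAy : (A : X →ₗ[ℝ] X) y - y
        = ((ρ y : X) - S (m + 1) (ρ y : X)) := by
      show A y - y = _
      rw [hAapp, hSkρ, sub_zero]
      abel
    rw [hAy]
    have h1 : ‖(ρ y : X) - S (m + 1) (ρ y : X)‖ ≤ δ * ‖(ρ y : X)‖ :=
      hgood _ (ρ y).2
    have h2 : ‖(ρ y : X)‖ ≤ 2 * C * ‖y‖ := by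
      have h3 : ρ y = ((u⁻¹ : (H' →L[ℝ] H')ˣ) : H' →L[ℝ] H') (π y) := by
        rw [hρapp, hSky, sub_zero]
      calc ‖(ρ y : X)‖ = ‖ρ y‖ := rfl
        _ ≤ 2 * ‖π y‖ := by rw [h3]; exact huinv_bound _
        _ ≤ 2 * (C * ‖y‖) := by
            have := hCπ y
            have hn : ‖π y‖ = ‖(π y : X)‖ := rfl
            rw [hn]; linarith
        _ = 2 * C * ‖y‖ := by ring
    calc ‖(ρ y : X) - S (m + 1) (ρ y : X)‖ ≤ δ * ‖(ρ y : X)‖ := h1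
      _ ≤ δ * (2 * C * ‖y‖) := by gcongr
      _ = 2 * C * δ * ‖y‖ := by ring
      _ ≤ ε * ‖y‖ := by gcongr
  · -- (2) image
    rintro _ ⟨y, hy, rfl⟩
    have : (A : X →ₗ[ℝ] X) y
        = y + ((ρ y : X) - (S (m + 1) (ρ y : X) - S k (ρ y : X))) := hAapp y
    rw [this]
    refine Submodule.add_mem _ (Submodule.mem_sup_left (hYIic hy)) ?_
    refine Submodule.sub_mem _ (Submodule.mem_sup_right (hH'H (ρ y).2)) ?_
    exact Submodule.mem_sup_left (hYIic (hQmemY ((ρ y : X))))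
  · -- (3) H is captured
    intro h hh
    have hmem : h - S k h ∈ H' := ⟨h, hh, rfl⟩
    set h' : H' := ⟨h - S k h, hmem⟩ with hh'
    have hz : S (m + 1) (h' : X) ∈ Y := by
      have := hQmemY ((h' : X))
      rwa [hH'0 _ h'.2, sub_zero] at this
    have h1 : h - S k h ∈ Submodule.map (A : X →ₗ[ℝ] X) Y :=
      ⟨S (m + 1) (h' : X), hz, hkey h'⟩
    have h2 : S k h ∈ ⨆ i ∈ Finset.Iio k, V i := FDD.S_mem hV hS h k
    have : h = S k h + (h - S k h) := by abel
    rw [this]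
    exact Submodule.add_mem _ (Submodule.mem_sup_left h2) (Submodule.mem_sup_right h1)
  · -- (4) identity on the first spaces
    intro x hx
    have hSkx : S k x = x := hU x hx
    have hρx : ρ x = 0 := by
      rw [hρapp, hSkx, sub_self, map_zero, map_zero]
    show A x = x
    rw [hAapp, hρx]
    simp


end
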